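/- Let G be a finite group acting on a finite set X, and suppose a bijection F : X → X commutes with the G-action. If there exist algebraic integers (in a fixed p-adic ring) such that |Fix(g∘F^k)| ≡ |Fix(F^k)| mod q^k for all g ∈ G and all k ≥ 1 (congruence in the p-adic ring, q a power of p), and c = v_q(|G|), then |Fix(F̄^k)| ≡ |Fix(F^k)| mod q^{k−c} for all k ≥ c, where F̄ is the induced map on X/G. -/

import Mathlib

open MulAction Finset

private lemma burnside_key {G : Type*} [Group G] [Fintype G] {X : Type*} [Fintype X]
    [MulAction G X]
    (P : Equiv.Perm X)
    (Fb : Quotient (orbitRel G X) → Quotient (orbitRel G X))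
    (hFb : ∀ x : X, Fb (Quotient.mk (orbitRel G X) x) = Quotient.mk (orbitRel G X) (P x)) :
    Fintype.card G * Nat.card {ω : Quotient (orbitRel G X) // Fb ω = ω}
      = ∑ g : G, Nat.card {x : X // g • P x = x} := by
  classical
  haveI : Fintype (Quotient (orbitRel G X)) := Fintype.ofFinite _
  -- Step 1: swap the double count
  have step1 : ∑ g : G, Nat.card {x : X // g • P x = x}
      = ∑ x : X, Nat.card {g : G // g • P x = x} := by
    simp only [Nat.card_eq_fintype_card, Fintype.card_subtype, Finset.card_filter]
    exact Finset.sum_comm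
  -- Step 2: pointwise count of group elements
  have step2 : ∀ x : X, Nat.card {g : G // g • P x = x}
      = if Fb (Quotient.mk (orbitRel G X) x) = Quotient.mk (orbitRel G X) x
        then Fintype.card (stabilizer G x) else 0 := by
    intro x
    by_cases hx : Fb (Quotient.mk (orbitRel G X) x) = Quotient.mk (orbitRel G X) x
    · rw [if_pos hx]
      rw [hFb] at hx
      obtain ⟨g0, hg0⟩ := MulAction.orbitRel_apply.mp (Quotient.exact hx)
      -- hg0 : g0 • x = P x
      have e : {g : G // g • P x = x} ≃ stabilizer G x :=
        { toFun := fun g => ⟨g.1 * g0, by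
            have := g.2
            simp only [MulAction.mem_stabilizer_iff, mul_smul, hg0, this]⟩
          invFun := fun s => ⟨s.1 * g0⁻¹, by
            have hs : s.1 • x = x := s.2
            have : g0⁻¹ • P x = x := by rw [← hg0, inv_smul_smul]
            rw [mul_smul, this, hs]⟩
          left_inv := fun g => by ext; simp
          right_inv := fun s => by ext; simp }
      rw [Nat.card_congr e, Nat.card_eq_fintype_card]
    · rw [if_neg hx]
      rw [Nat.card_eq_zero]
      left
      constructor
      intro ⟨g, hg⟩
      apply hx
      have : x ∈ orbit G (P x) := ⟨g, hg⟩
      rw [hFb, ← Quotient.sound (MulAction.orbitRel_apply.mpr this)]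
  -- Step 3: sum of stabilizer sizes over each orbit is |G|
  have step3 : ∀ ω : Quotient (orbitRel G X),
      ∑ x ∈ univ.filter (fun x : X => Quotient.mk (orbitRel G X) x = ω),
        Fintype.card (stabilizer G x) = Fintype.card G := by
    intro ω
    induction ω using Quotient.inductionOn with
    | h x0 =>
      have hconst : ∀ x ∈ univ.filter
          (fun x : X => Quotient.mk (orbitRel G X) x = Quotient.mk (orbitRel G X) x0),
          Fintype.card (stabilizer G x) = Fintype.card (stabilizer G x0) := by
        intro x hx
        rw [Finset.mem_filter] at hx
        have hrel : orbitRel G X x x0 := Quotient.exact hx.2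
        exact Fintype.card_congr (MulAction.stabilizerEquivStabilizerOfOrbitRel hrel).toEquiv
      rw [Finset.sum_congr rfl hconst, Finset.sum_const, smul_eq_mul]
      have hcardfib : (univ.filter
          (fun x : X => Quotient.mk (orbitRel G X) x = Quotient.mk (orbitRel G X) x0)).card
          = Fintype.card (orbit G x0) := by
        rw [← Fintype.card_subtype]
        apply Fintype.card_congr
        apply Equiv.subtypeEquivRight
        intro x
        constructor
        · intro h; exact MulAction.orbitRel_apply.mp (Quotient.exact h)
        · intro h; exact Quotient.sound (MulAction.orbitRel_apply.mpr h)
      rw [hcardfib]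
      exact MulAction.card_orbit_mul_card_stabilizer_eq_card_group G x0
  rw [step1]; symm
  calc ∑ x : X, Nat.card {g : G // g • P x = x}
      = ∑ x : X, if Fb (Quotient.mk (orbitRel G X) x) = Quotient.mk (orbitRel G X) x
          then Fintype.card (stabilizer G x) else 0 := Finset.sum_congr rfl fun x _ => step2 x
    _ = ∑ ω : Quotient (orbitRel G X),
          ∑ x ∈ univ.filter (fun x : X => Quotient.mk (orbitRel G X) x = ω),
            (if Fb (Quotient.mk (orbitRel G X) x) = Quotient.mk (orbitRel G X) x
              then Fintype.card (stabilizer G x) else 0) :=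
        (Finset.sum_fiberwise univ (fun x => Quotient.mk (orbitRel G X) x) _).symm
    _ = ∑ ω : Quotient (orbitRel G X), if Fb ω = ω then Fintype.card G else 0 := by
        refine Finset.sum_congr rfl fun ω _ => ?_
        by_cases hω : Fb ω = ω
        · rw [if_pos hω, ← step3 ω]
          refine Finset.sum_congr rfl fun x hx => ?_
          rw [Finset.mem_filter] at hx
          rw [hx.2, if_pos hω]
        · rw [if_neg hω]
          refine Finset.sum_eq_zero fun x hx => ?_
          rw [Finset.mem_filter] at hx
          rw [hx.2, if_neg hω]
    _ = Fintype.card G * Nat.card {ω : Quotient (orbitRel G X) // Fb ω = ω} := by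
        rw [← Finset.sum_filter, Finset.sum_const, smul_eq_mul,
          Nat.card_eq_fintype_card, Fintype.card_subtype, mul_comm]

private lemma val_sum_le {K : Type*} [Field K] (v : K → WithTop ℝ)
    (hv0 : v 0 = ⊤) (hvadd : ∀ x y : K, min (v x) (v y) ≤ v (x + y))
    {ι : Type*} (s : Finset ι) (f : ι → K) (a : WithTop ℝ)
    (h : ∀ i ∈ s, a ≤ v (f i)) : a ≤ v (∑ i ∈ s, f i) := by
  classical
  induction s using Finset.induction_on with
  | empty => simp [hv0]
  | insert b s hx ih =>
    rw [Finset.sum_insert hx]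
    refine le_trans (le_min (h b (Finset.mem_insert_self _ _)) ?_) (hvadd _ _)
    exact ih fun i hi => h i (Finset.mem_insert_of_mem hi)

theorem quotient_fixed_points_congr
    {K : Type*} [Field K] [CharZero K] (v : K → WithTop ℝ)
    (hv0 : ∀ x : K, v x = ⊤ ↔ x = 0)
    (hvmul : ∀ x y : K, v (x * y) = v x + v y)
    (hvadd : ∀ x y : K, min (v x) (v y) ≤ v (x + y))
    (q : K) (hq : v q = (1 : ℝ))
    {G : Type*} [Group G] [Fintype G] {X : Type*} [Finite X] [MulAction G X]
    (F : Equiv.Perm X) (hF : ∀ (g : G) (x : X), F (g • x) = g • F x)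
    (Fbar : Quotient (MulAction.orbitRel G X) → Quotient (MulAction.orbitRel G X))
    (hFbar : ∀ x : X, Fbar (Quotient.mk (MulAction.orbitRel G X) x)
      = Quotient.mk (MulAction.orbitRel G X) (F x))
    (c : ℝ) (hc : (c : WithTop ℝ) = v ((Nat.card G : K)))
    (hcong : ∀ (g : G) (k : ℕ), 1 ≤ k →
      ((k : ℝ) : WithTop ℝ) ≤
        v ((Nat.card {x : X // g • (F ^ k) x = x} : K)
            - (Nat.card {x : X // (F ^ k) x = x} : K))) :
    ∀ k : ℕ, c ≤ (k : ℝ) →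
      (((k : ℝ) - c : ℝ) : WithTop ℝ) ≤
        v ((Nat.card {ω : Quotient (MulAction.orbitRel G X) // Fbar^[k] ω = ω} : K)
            - (Nat.card {x : X // (F ^ k) x = x} : K)) := by
  classical
  haveI : Fintype X := Fintype.ofFinite X
  have hv0' : v 0 = ⊤ := (hv0 0).mpr rfl
  have hv1 : v 1 = 0 := by
    have h := hvmul 1 1
    rw [one_mul] at h
    have hne : v 1 ≠ ⊤ := fun ht => one_ne_zero ((hv0 1).mp ht)
    obtain ⟨r, hr⟩ := WithTop.ne_top_iff_exists.mp hne
    rw [← hr, ← WithTop.coe_add, WithTop.coe_inj] at h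
    have : r = 0 := by linarith
    rw [← hr, this, WithTop.coe_zero]
  have hvm1 : v (-1 : K) = 0 := by
    have h := hvmul (-1 : K) (-1)
    rw [neg_mul_neg, one_mul, hv1] at h
    have hne : v (-1 : K) ≠ ⊤ := fun ht => by
      have := (hv0 (-1)).mp ht; norm_num at this
    obtain ⟨r, hr⟩ := WithTop.ne_top_iff_exists.mp hne
    rw [← hr, ← WithTop.coe_add, ← WithTop.coe_zero, WithTop.coe_inj] at h
    have : r = 0 := by linarith
    rw [← hr, this, WithTop.coe_zero]
  have hvneg : ∀ x : K, v (-x) = v x := fun x => by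
    rw [← neg_one_mul, hvmul, hvm1, zero_add]
  have hvsub : ∀ x y : K, min (v x) (v y) ≤ v (x - y) := fun x y => by
    rw [sub_eq_add_neg]
    calc min (v x) (v y) = min (v x) (v (-y)) := by rw [hvneg]
      _ ≤ v (x + -y) := hvadd _ _
  have hvnat : ∀ n : ℕ, (0 : WithTop ℝ) ≤ v (n : K) := by
    intro n
    induction n with
    | zero => simp [hv0']
    | succ n ih =>
      push_cast
      exact le_trans (le_min ih hv1.symm.le) (hvadd _ _)
  have hc0 : (0 : ℝ) ≤ c := by
    have h := hvnat (Nat.card G)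
    rw [← hc] at h
    exact_mod_cast h
  intro k hk
  by_cases hk0 : k = 0
  · subst hk0
    have hc' : c = 0 := le_antisymm (by exact_mod_cast hk) hc0
    rw [hc']
    norm_num
    exact le_trans (le_min (hvnat _) (hvnat _)) (hvsub _ _)
  · have hk1 : 1 ≤ k := Nat.one_le_iff_ne_zero.mpr hk0
    have hiter : ∀ (m : ℕ) (x : X), Fbar^[m] (Quotient.mk (MulAction.orbitRel G X) x)
        = Quotient.mk (MulAction.orbitRel G X) ((F ^ m) x) := by
      intro m
      induction m with
      | zero => intro x; simp
      | succ m ih =>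
        intro x
        rw [Function.iterate_succ_apply, hFbar, ih]
        congr 1
    have hkey := burnside_key (F ^ k) (Fbar^[k]) (fun x => hiter k x)
    have hkeyK : (Fintype.card G : K)
        * (Nat.card {ω : Quotient (MulAction.orbitRel G X) // Fbar^[k] ω = ω} : K)
        = ∑ g : G, (Nat.card {x : X // g • (F ^ k) x = x} : K) := by
      exact_mod_cast congrArg (Nat.cast (R := K)) hkey
    set A : K := (Nat.card {ω : Quotient (MulAction.orbitRel G X) // Fbar^[k] ω = ω} : K) with hA
    set B : K := (Nat.card {x : X // (F ^ k) x = x} : K) with hB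
    have hdist : (Fintype.card G : K) * (A - B)
        = ∑ g : G, ((Nat.card {x : X // g • (F ^ k) x = x} : K) - B) := by
      rw [Finset.sum_sub_distrib, ← hkeyK, Finset.sum_const, Finset.card_univ,
        nsmul_eq_mul, mul_sub]
    have hklow : ((k : ℝ) : WithTop ℝ) ≤ v ((Fintype.card G : K) * (A - B)) := by
      rw [hdist]
      exact val_sum_le v hv0' hvadd _ _ _ (fun g _ => hcong g k hk1)
    rw [hvmul] at hklow
    have hvG : v ((Fintype.card G : K)) = (c : WithTop ℝ) := by
      rw [hc, Nat.card_eq_fintype_card]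
    rw [hvG] at hklow
    rcases eq_or_ne (v (A - B)) ⊤ with ht | ht
    · rw [ht]; exact le_top
    · obtain ⟨r, hr⟩ := WithTop.ne_top_iff_exists.mp ht
      rw [← hr] at hklow ⊢
      rw [← WithTop.coe_add] at hklow
      have hle : (k : ℝ) ≤ c + r := WithTop.coe_le_coe.mp hklow
      exact WithTop.coe_le_coe.mpr (by linarith)
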